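/- arXiv:1510.04899 — 2 statements merged into one kernel-verified Lean document; each statement's English description precedes it below -/
import Mathlib

section
/- Fix real constants λ and μ̄, and define J : ℝ × ℝ → ℝ by J(ξ, Π) = e^{μ̄²ξ}·(Π² − λ·Π) + (λ²/4)·(e^{μ̄²ξ} − 1). Then: (i) J(0, Π) = Π² − λ·Π for all Π; (ii) ∂²J/∂Π²(ξ, Π) = 2·e^{μ̄²ξ} > 0 for all ξ, Π; and (iii) J satisfies the nonlinear PDE ∂J/∂ξ(ξ, Π) = (1/2)·μ̄² · (∂J/∂Π(ξ, Π))² / (∂²J/∂Π²(ξ, Π)) for all ξ, Π. -/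
lemma derivP (lam μbar ξ : ℝ) :
    deriv (fun P : ℝ => Real.exp (μbar ^ 2 * ξ) * (P ^ 2 - lam * P) +
      (lam ^ 2 / 4) * (Real.exp (μbar ^ 2 * ξ) - 1)) =
    fun P => Real.exp (μbar ^ 2 * ξ) * (2 * P - lam) := by
  funext P
  have h : HasDerivAt (fun P : ℝ => Real.exp (μbar ^ 2 * ξ) * (P ^ 2 - lam * P) +
      (lam ^ 2 / 4) * (Real.exp (μbar ^ 2 * ξ) - 1))
      (Real.exp (μbar ^ 2 * ξ) * (2 * P - lam)) P := by
    have h1 : HasDerivAt (fun P : ℝ => P ^ 2 - lam * P) (2 * P - lam) P := by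
      have : HasDerivAt (fun P : ℝ => P ^ 2 - lam * P) _ P :=
        ((hasDerivAt_pow 2 P).sub ((hasDerivAt_id' P).const_mul lam))
      convert this using 1; norm_num
    simpa using ((h1.const_mul (Real.exp (μbar ^ 2 * ξ))).add_const ((lam ^ 2 / 4) * (Real.exp (μbar ^ 2 * ξ) - 1)))
  exact h.deriv

/-- The explicit quadratic-in-`Π` solution of Lipton's nonlinear PDE
`J_ξ = (1/2)·μ̄²·J_Π²/J_ΠΠ` with initial condition `J(0,Π) = Π² − λΠ`.
Here the second argument of `J` plays the role of the wealth `Π`. -/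
theorem lipton_explicit_solution
    (lam μbar : ℝ) (J : ℝ → ℝ → ℝ)
    (hJ : ∀ ξ P : ℝ, J ξ P =
      Real.exp (μbar ^ 2 * ξ) * (P ^ 2 - lam * P) +
      (lam ^ 2 / 4) * (Real.exp (μbar ^ 2 * ξ) - 1)) :
    (∀ P : ℝ, J 0 P = P ^ 2 - lam * P) ∧
    (∀ ξ P : ℝ, deriv (deriv (fun P' => J ξ P')) P = 2 * Real.exp (μbar ^ 2 * ξ) ∧
      0 < deriv (deriv (fun P' => J ξ P')) P) ∧
    (∀ ξ P : ℝ, deriv (fun ξ' => J ξ' P) ξ =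
      (1 / 2) * μbar ^ 2 * (deriv (fun P' => J ξ P') P) ^ 2 /
        deriv (deriv (fun P' => J ξ P')) P) := by
  have hfun : ∀ ξ : ℝ, (fun P' => J ξ P') =
      fun P : ℝ => Real.exp (μbar ^ 2 * ξ) * (P ^ 2 - lam * P) +
        (lam ^ 2 / 4) * (Real.exp (μbar ^ 2 * ξ) - 1) := by
    intro ξ; funext P; exact hJ ξ P
  have hd1 : ∀ ξ P : ℝ, deriv (fun P' => J ξ P') P =
      Real.exp (μbar ^ 2 * ξ) * (2 * P - lam) := by
    intro ξ P; rw [hfun ξ, derivP]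
  have hd2 : ∀ ξ P : ℝ, deriv (deriv (fun P' => J ξ P')) P =
      2 * Real.exp (μbar ^ 2 * ξ) := by
    intro ξ P
    rw [hfun ξ, derivP]
    have h1 : HasDerivAt (fun P : ℝ => 2 * P - lam) 2 P := by
      simpa using ((hasDerivAt_id P).const_mul 2).sub_const lam
    have h2 := h1.const_mul (Real.exp (μbar ^ 2 * ξ))
    rw [h2.deriv]; ring
  refine ⟨fun P => by simp [hJ 0 P], fun ξ P => ⟨hd2 ξ P, by
    rw [hd2]; positivity⟩, fun ξ P => ?_⟩
  have hξfun : (fun ξ' => J ξ' P) =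
      fun ξ' : ℝ => Real.exp (μbar ^ 2 * ξ') * (P ^ 2 - lam * P) +
        (lam ^ 2 / 4) * (Real.exp (μbar ^ 2 * ξ') - 1) := by
    funext ξ'; exact hJ ξ' P
  have hdξ : deriv (fun ξ' => J ξ' P) ξ =
      μbar ^ 2 * Real.exp (μbar ^ 2 * ξ) * (P ^ 2 - lam * P) +
      (lam ^ 2 / 4) * (μbar ^ 2 * Real.exp (μbar ^ 2 * ξ)) := by
    rw [hξfun]
    have he : HasDerivAt (fun ξ' : ℝ => Real.exp (μbar ^ 2 * ξ'))
        (μbar ^ 2 * Real.exp (μbar ^ 2 * ξ)) ξ := by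
      have h0 := ((hasDerivAt_id ξ).const_mul (μbar ^ 2)).exp
      simp only [id] at h0
      convert h0 using 1
      ring
    have h : HasDerivAt (fun ξ' : ℝ => Real.exp (μbar ^ 2 * ξ') * (P ^ 2 - lam * P) +
        (lam ^ 2 / 4) * (Real.exp (μbar ^ 2 * ξ') - 1))
        (μbar ^ 2 * Real.exp (μbar ^ 2 * ξ) * (P ^ 2 - lam * P) +
          (lam ^ 2 / 4) * (μbar ^ 2 * Real.exp (μbar ^ 2 * ξ))) ξ :=
      (he.mul_const _).add ((he.sub_const 1).const_mul _)
    exact h.deriv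
  rw [hdξ, hd1, hd2]
  have hepos : Real.exp (μbar ^ 2 * ξ) ≠ 0 := (Real.exp_pos _).ne'
  field_simp
  ring
end

section
/- Let σ > 0 and K > 0. Define N(z) = ∫_{−∞}^{z} e^{−u²/2}/√(2π) du, d₁(S,τ) = (log(S/K) + σ²τ/2)/(σ√τ), d₂(S,τ) = d₁(S,τ) − σ√τ, and c_BS(S,τ) = S·N(d₁(S,τ)) − K·N(d₂(S,τ)) for S, τ > 0. For x ∈ (−K, 0) and τ > 0 set y = −x, z = −K²/x, and define c(x,τ) = y − c_BS(y,τ) − K·N(d₁(y,τ)) − (y/K)·( z − c_BS(z,τ) − K·N(d₁(z,τ)) ). Then for each fixed τ > 0, c(x,τ) → 0 as x → 0 from the left. -/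
open MeasureTheory Filter

/-- The closed-form up-and-out call price from the displaced lognormal example
tends to `0` as `x → 0⁻` (through the domain `(−K, 0)`), for each fixed `τ > 0`. -/
theorem barrier_call_limit_at_zero
    (σ K : ℝ) (hσ : 0 < σ) (hK : 0 < K)
    (N : ℝ → ℝ)
    (hN : ∀ z : ℝ, N z = ∫ u in Set.Iic z, Real.exp (-u ^ 2 / 2) / Real.sqrt (2 * Real.pi))
    (d₁ d₂ cBS : ℝ → ℝ → ℝ)
    (hd₁ : ∀ S τ : ℝ, d₁ S τ = (Real.log (S / K) + σ ^ 2 * τ / 2) / (σ * Real.sqrt τ))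
    (hd₂ : ∀ S τ : ℝ, d₂ S τ = d₁ S τ - σ * Real.sqrt τ)
    (hcBS : ∀ S τ : ℝ, cBS S τ = S * N (d₁ S τ) - K * N (d₂ S τ))
    (c : ℝ → ℝ → ℝ)
    (hc : ∀ x ∈ Set.Ioo (-K) (0 : ℝ), ∀ τ : ℝ, 0 < τ →
      c x τ = (-x) - cBS (-x) τ - K * N (d₁ (-x) τ) -
        ((-x) / K) * ((-K ^ 2 / x) - cBS (-K ^ 2 / x) τ - K * N (d₁ (-K ^ 2 / x) τ))) :
    ∀ τ : ℝ, 0 < τ →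
      Tendsto (fun x => c x τ) (nhdsWithin 0 (Set.Ioo (-K) 0)) (nhds 0) := by
  intro τ hτ
  -- `N` is the cdf of the standard gaussian
  have hNg : N = ⇑(ProbabilityTheory.cdf (ProbabilityTheory.gaussianReal 0 1)) := by
    funext z
    rw [hN z, ProbabilityTheory.cdf_eq_real, measureReal_def,
      ProbabilityTheory.gaussianReal_apply_eq_integral _ one_ne_zero,
      ENNReal.toReal_ofReal
        (integral_nonneg fun x => ProbabilityTheory.gaussianPDFReal_nonneg _ _ _)]
    refine setIntegral_congr_fun measurableSet_Iic fun u _ => ?_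
    simp [ProbabilityTheory.gaussianPDFReal, div_eq_inv_mul, mul_comm]
  have Nt : Tendsto N atTop (nhds 1) := by
    rw [hNg]; exact ProbabilityTheory.tendsto_cdf_atTop _
  have Nb : Tendsto N atBot (nhds 0) := by
    rw [hNg]; exact ProbabilityTheory.tendsto_cdf_atBot _
  set l := nhdsWithin (0 : ℝ) (Set.Ioo (-K) 0) with hl
  have hb : 0 < σ * Real.sqrt τ := mul_pos hσ (Real.sqrt_pos.2 hτ)
  -- y = -x tends to 0 from the right
  have hy0 : Tendsto (fun x : ℝ => -x) l (nhds 0) := by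
    have := (continuous_neg.tendsto (0 : ℝ)).mono_left (nhdsWithin_le_nhds (s := Set.Ioo (-K) 0))
    simpa using this
  have hmem : ∀ᶠ x in l, x ∈ Set.Ioo (-K) (0 : ℝ) := eventually_mem_nhdsWithin
  have hy : Tendsto (fun x : ℝ => -x) l (nhdsWithin 0 (Set.Ioi 0)) := by
    rw [tendsto_nhdsWithin_iff]
    exact ⟨hy0, hmem.mono fun x hx => by simpa using hx.2⟩
  -- z = -K²/x tends to +∞
  have hz : Tendsto (fun x : ℝ => -K ^ 2 / x) l atTop := by
    have h := (tendsto_inv_nhdsGT_zero.comp hy).const_mul_atTop (pow_pos hK 2)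
    refine h.congr fun x => ?_
    show K ^ 2 * (-x)⁻¹ = -K ^ 2 / x
    rw [← div_eq_mul_inv, div_neg, neg_div]
  -- d₁ at +∞
  have hd₁top : Tendsto (fun S => d₁ S τ) atTop atTop := by
    simp only [hd₁]
    refine Tendsto.atTop_div_const hb ?_
    refine tendsto_atTop_add_const_right _ _ ?_
    exact Real.tendsto_log_atTop.comp (tendsto_id.atTop_div_const hK)
  have hd₂top : Tendsto (fun S => d₂ S τ) atTop atTop := by
    simp only [hd₂, sub_eq_add_neg]
    exact tendsto_atTop_add_const_right _ _ hd₁top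
  -- d₁(-x) at -∞
  have hyK : Tendsto (fun x : ℝ => -x / K) l (nhdsWithin 0 (Set.Ioi 0)) := by
    rw [tendsto_nhdsWithin_iff]
    constructor
    · have := hy0.div_const K
      simpa using this
    · exact hmem.mono fun x hx => by
        have : (0:ℝ) < -x := by simpa using hx.2
        exact div_pos this hK
  have hd₁bot : Tendsto (fun x : ℝ => d₁ (-x) τ) l atBot := by
    simp only [hd₁]
    refine Tendsto.atBot_div_const hb ?_
    refine tendsto_atBot_add_const_right _ _ ?_
    exact Real.tendsto_log_nhdsGT_zero.comp hyK
  have hd₂bot : Tendsto (fun x : ℝ => d₂ (-x) τ) l atBot := by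
    simp only [hd₂, sub_eq_add_neg]
    exact tendsto_atBot_add_const_right _ _ hd₁bot
  -- N compositions
  have hA : Tendsto (fun x : ℝ => N (d₁ (-x) τ)) l (nhds 0) := Nb.comp hd₁bot
  have hB : Tendsto (fun x : ℝ => N (d₂ (-x) τ)) l (nhds 0) := Nb.comp hd₂bot
  have hC : Tendsto (fun x : ℝ => N (d₁ (-K ^ 2 / x) τ)) l (nhds 1) := Nt.comp (hd₁top.comp hz)
  have hD : Tendsto (fun x : ℝ => N (d₂ (-K ^ 2 / x) τ)) l (nhds 1) := Nt.comp (hd₂top.comp hz)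
  -- limit of the rearranged expression
  have hE : Tendsto
      (fun x : ℝ => (-x) - ((-x) * N (d₁ (-x) τ) - K * N (d₂ (-x) τ)) - K * N (d₁ (-x) τ)
        - (K * (1 - N (d₁ (-K ^ 2 / x) τ))
          + ((-x) / K) * (K * N (d₂ (-K ^ 2 / x) τ) - K * N (d₁ (-K ^ 2 / x) τ))))
      l (nhds 0) := by
    have := ((hy0.sub ((hy0.mul hA).sub (hB.const_mul K))).sub (hA.const_mul K)).sub
      ((((tendsto_const_nhds (x := (1:ℝ))).sub hC).const_mul K).add
        ((hy0.div_const K).mul ((hD.const_mul K).sub (hC.const_mul K))))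
    norm_num at this
    convert this using 2
    norm_num
  refine hE.congr' ?_
  filter_upwards [hmem] with x hx
  have hxne : x ≠ 0 := ne_of_lt hx.2
  have hKne : K ≠ 0 := ne_of_gt hK
  rw [hc x hx τ hτ, hcBS, hcBS]
  field_simp
  ring
end
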